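/- A subset K of a Banach space X is relatively compact (i.e., has compact closure) if and only if there exists a sequence (x_n) in X with ‖x_n‖ → 0 such that K is contained in the closed convex hull of {x_n : n ∈ ℕ}. -/

import Mathlib

open Filter

private lemma geo_sum_aux : ∀ n : ℕ, ∑ i ∈ Finset.range n, ((1:ℝ)/2)^(i+1) = 1 - (1/2)^n := by
  intro n
  induction n with
  | zero => simp
  | succ n ih =>
    rw [Finset.sum_range_succ, ih, pow_succ]
    ring

/-- **Grothendieck's theorem.** A subset `K` of a Banach space is relatively compact if and only
if it is contained in the closed convex hull of a sequence converging in norm to zero. -/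
theorem grothendieck_relatively_compact_iff {X : Type*} [NormedAddCommGroup X]
    [NormedSpace ℝ X] [CompleteSpace X] (K : Set X) :
    IsCompact (closure K) ↔
      ∃ x : ℕ → X, Tendsto (fun n => ‖x n‖) atTop (nhds 0) ∧
        K ⊆ closure (convexHull ℝ (Set.range x)) := by
  constructor
  · intro hK
    have htb : TotallyBounded K := hK.totallyBounded.subset subset_closure
    have hC : ∀ n : ℕ, ∃ t : Set X, t.Finite ∧
        K ⊆ ⋃ y ∈ t, Metric.ball y ((1/4 : ℝ)^n) := fun n =>
      Metric.totallyBounded_iff.mp htb _ (by positivity)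
    choose C hCfin hCcov using hC
    -- The difference sets
    set D : ℕ → Set X := fun n =>
      Nat.casesOn n (C 0) (fun m =>
        {v ∈ Set.image2 (· - ·) (C (m+1)) (C m) | ‖v‖ ≤ 2 * (1/4 : ℝ)^m}) with hD
    have hDfin : ∀ n, (D n).Finite := by
      intro n
      cases n with
      | zero => exact hCfin 0
      | succ m =>
        exact ((hCfin (m+1)).image2 _ (hCfin m)).subset (Set.sep_subset _ _)
    have hDbound : ∀ m, ∀ v ∈ D (m+1), ‖v‖ ≤ 2 * (1/4 : ℝ)^m := fun m v hv => hv.2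
    -- enumerate the sets by lists
    set L : ℕ → List X := fun n => (hDfin n).toFinset.toList with hL
    have hLmem : ∀ n v, v ∈ D n ↔ v ∈ L n := by
      intro n v
      rw [hL]
      simp [Finset.mem_toList, Set.Finite.mem_toFinset]
    -- the sequence
    set x : ℕ → X := fun m =>
      (2:ℝ)^((Nat.unpair m).1 + 1) • ((L (Nat.unpair m).1).getD (Nat.unpair m).2 0) with hx
    have hx_of_lt : ∀ n i (h : i < (L n).length),
        x (Nat.pair n i) = (2:ℝ)^(n+1) • (L n)[i] := by
      intro n i h
      rw [hx]
      simp only [Nat.unpair_pair]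
      rw [List.getD_eq_getElem?_getD, List.getElem?_eq_getElem h]
      rfl
    have hx_of_ge : ∀ m, (L (Nat.unpair m).1).length ≤ (Nat.unpair m).2 → x m = 0 := by
      intro m hm
      simp only [hx]
      rw [List.getD_eq_getElem?_getD, List.getElem?_eq_none hm]
      simp
    have hmem : ∀ n, ∀ v ∈ D n, (2:ℝ)^(n+1) • v ∈ Set.range x := by
      intro n v hv
      rw [hLmem] at hv
      obtain ⟨i, hi, hiv⟩ := List.mem_iff_getElem.mp hv
      exact ⟨Nat.pair n i, by rw [hx_of_lt n i hi, hiv]⟩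
    have hzero : (0:X) ∈ Set.range x := by
      refine ⟨Nat.pair 0 (L 0).length, ?_⟩
      apply hx_of_ge
      simp [Nat.unpair_pair]
    refine ⟨x, ?_, ?_⟩
    · -- norms tend to zero
      rw [← tendsto_zero_iff_norm_tendsto_zero]
      rw [NormedAddCommGroup.tendsto_nhds_zero]
      intro ε hε
      rw [← Nat.cofinite_eq_atTop, Filter.eventually_cofinite]
      obtain ⟨N, hN⟩ : ∃ N : ℕ, ((1:ℝ)/2)^N < ε/8 :=
        exists_pow_lt_of_lt_one (by positivity) (by norm_num)
      set M : ℕ := (Finset.range (N+2)).sup (fun n => (L n).length) with hM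
      have hsub : {m | ¬ ‖x m‖ < ε} ⊆
          (fun m => Nat.unpair m) ⁻¹' (Set.Iic (N+1) ×ˢ Set.Iio (M+1)) := by
        intro m hm
        simp only [Set.mem_setOf_eq, not_lt] at hm
        set n := (Nat.unpair m).1 with hn
        set i := (Nat.unpair m).2 with hi
        have hilen : i < (L n).length := by
          by_contra h
          rw [hx_of_ge m (not_lt.mp h)] at hm
          simp only [norm_zero] at hm
          linarith
        have hvD : (L n).getD i 0 ∈ D n := by
          rw [hLmem]
          rw [List.getD_eq_getElem?_getD, List.getElem?_eq_getElem hilen]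
          exact List.getElem_mem hilen
        have hnN : n ≤ N + 1 := by
          by_contra h
          push_neg at h
          obtain ⟨p, hp⟩ : ∃ p, n = p + 1 := ⟨n - 1, by omega⟩
          have hvD' : (L n).getD i 0 ∈ D (p+1) := by rw [← hp]; exact hvD
          have hbd : ‖(L n).getD i 0‖ ≤ 2 * (1/4 : ℝ)^p := hDbound p _ hvD'
          have hxm0 : x m = (2:ℝ)^(n+1) • (L n).getD i 0 := rfl
          have hxm : ‖x m‖ = (2:ℝ)^(n+1) * ‖(L n).getD i 0‖ := by
            rw [hxm0, norm_smul]
            simp [abs_of_pos (pow_pos (by norm_num : (0:ℝ) < 2) (n+1))]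
          have h1 : ‖x m‖ ≤ (2:ℝ)^(n+1) * (2 * (1/4 : ℝ)^p) := by
            rw [hxm]
            exact mul_le_mul_of_nonneg_left hbd (by positivity)
          have h2 : (2:ℝ)^(n+1) * (2 * (1/4 : ℝ)^p) = 8 * (1/2:ℝ)^p := by
            rw [hp]
            rw [show ((1:ℝ)/4) = (1/2) * (1/2) by norm_num,
              show ((1:ℝ)/2) = 2⁻¹ by norm_num]
            rw [mul_pow]
            rw [pow_succ, pow_succ]
            field_simp
            ring_nf
            rw [← mul_pow]
            norm_num
          have h3 : ((1:ℝ)/2)^p ≤ (1/2:ℝ)^N := by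
            apply pow_le_pow_of_le_one (by norm_num) (by norm_num)
            omega
          have : ε ≤ 8 * ((1:ℝ)/2)^N := by
            calc ε ≤ ‖x m‖ := hm
            _ ≤ (2:ℝ)^(n+1) * (2 * (1/4 : ℝ)^p) := h1
            _ = 8 * (1/2:ℝ)^p := h2
            _ ≤ 8 * (1/2:ℝ)^N := by linarith
          linarith
        have hiM : i < M + 1 := by
          have : (L n).length ≤ M := Finset.le_sup (f := fun j => (L j).length) (Finset.mem_range.mpr (show n < N+2 by omega))
          omega
        exact ⟨hnN, hiM⟩
      exact Set.Finite.subset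
        (((Set.finite_Iic (N+1)).prod (Set.finite_Iio (M+1))).preimage
          (Function.Injective.injOn (fun a b h => by
            rw [← Nat.pair_unpair a, ← Nat.pair_unpair b, h]))) hsub
    · -- containment in closed convex hull
      intro k hk
      have hc : ∀ n : ℕ, ∃ y ∈ C n, dist k y < (1/4 : ℝ)^n := by
        intro n
        have := hCcov n hk
        simp only [Set.mem_iUnion, Metric.mem_ball] at this
        obtain ⟨y, hy, hky⟩ := this
        exact ⟨y, hy, hky⟩
      choose c hc1 hc2 using hc
      set d : ℕ → X := fun n => Nat.casesOn n (c 0) (fun m => c (m+1) - c m) with hd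
      have hdD : ∀ n, d n ∈ D n := by
        intro n
        cases n with
        | zero => exact hc1 0
        | succ m =>
          refine ⟨Set.mem_image2_of_mem (hc1 (m+1)) (hc1 m), ?_⟩
          have h1 : ‖c (m+1) - c m‖ ≤ dist (c (m+1)) k + dist k (c m) := by
            rw [← dist_eq_norm]
            exact dist_triangle _ _ _
          have h2 : dist (c (m+1)) k < (1/4:ℝ)^(m+1) := by
            rw [dist_comm]; exact hc2 (m+1)
          have h3 : ((1:ℝ)/4)^(m+1) ≤ (1/4:ℝ)^m :=
            pow_le_pow_of_le_one (by norm_num) (by norm_num) (by omega)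
          have := hc2 m
          calc ‖c (m+1) - c m‖ ≤ dist (c (m+1)) k + dist k (c m) := h1
          _ ≤ (1/4:ℝ)^m + (1/4:ℝ)^m := by linarith
          _ = 2 * (1/4:ℝ)^m := by ring
      have hsum : ∀ N, ∑ n ∈ Finset.range (N+1), d n = c N := by
        intro N
        induction N with
        | zero => simp [hd]
        | succ N ih =>
          rw [Finset.sum_range_succ, ih]
          simp [hd]
      have hconv : ∀ N, c N ∈ convexHull ℝ (Set.range x) := by
        intro N
        set w : ℕ → ℝ := fun i => if i = N+1 then (1/2:ℝ)^(N+1) else (1/2)^(i+1) with hw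
        set z : ℕ → X := fun i => if i = N+1 then 0 else (2:ℝ)^(i+1) • d i with hz
        have hwcongr : ∀ i ∈ Finset.range (N+1), w i = ((1:ℝ)/2)^(i+1) := by
          intro i hi
          simp only [hw, if_neg (Nat.ne_of_lt (Finset.mem_range.mp hi))]
        have hzcongr : ∀ i ∈ Finset.range (N+1), w i • z i = d i := by
          intro i hi
          have hne : i ≠ N+1 := Nat.ne_of_lt (Finset.mem_range.mp hi)
          simp only [hw, hz, if_neg hne]
          rw [smul_smul, ← mul_pow]
          norm_num
        have key : ∑ i ∈ Finset.range (N+2), w i • z i ∈ convexHull ℝ (Set.range x) := by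
          apply (convex_convexHull ℝ _).sum_mem
          · intro i _
            simp only [hw]
            split <;> positivity
          · rw [Finset.sum_range_succ, Finset.sum_congr rfl hwcongr, geo_sum_aux]
            simp only [hw, if_pos rfl]
            ring
          · intro i _
            apply subset_convexHull
            simp only [hz]
            split
            · exact hzero
            · exact hmem i _ (hdD i)
        have heq : ∑ i ∈ Finset.range (N+2), w i • z i = c N := by
          rw [Finset.sum_range_succ, Finset.sum_congr rfl hzcongr, hsum N]
          simp only [hz, if_pos rfl, smul_zero, add_zero]
        rwa [heq] at key
      have htend : Tendsto c atTop (nhds k) := by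
        rw [Metric.tendsto_atTop]
        intro ε hε
        obtain ⟨N₀, hN₀⟩ : ∃ n : ℕ, ((1:ℝ)/4)^n < ε :=
          exists_pow_lt_of_lt_one hε (by norm_num)
        refine ⟨N₀, fun n hn => ?_⟩
        have h1 : dist (c n) k < (1/4:ℝ)^n := by rw [dist_comm]; exact hc2 n
        have h2 : ((1:ℝ)/4)^n ≤ (1/4:ℝ)^N₀ :=
          pow_le_pow_of_le_one (by norm_num) (by norm_num) hn
        linarith
      exact mem_closure_of_tendsto htend (Eventually.of_forall hconv)
  · rintro ⟨x, hx, hK⟩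
    have hx0 : Tendsto x atTop (nhds 0) := tendsto_zero_iff_norm_tendsto_zero.mpr hx
    have hcpt : IsCompact (insert (0:X) (Set.range x)) := hx0.isCompact_insert_range
    have htb : TotallyBounded (convexHull ℝ (Set.range x)) :=
      totallyBounded_convexHull.mpr
        (hcpt.totallyBounded.subset (Set.subset_insert _ _))
    have hcc : IsCompact (closure (convexHull ℝ (Set.range x))) :=
      TotallyBounded.isCompact_of_isClosed htb.closure isClosed_closure
    exact hcc.of_isClosed_subset isClosed_closure (closure_minimal hK isClosed_closure)
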